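/- Under the hypotheses of the abstract Stokes T-coercivity setup (b continuous bilinear on H × Q, right inverse p ↦ v_p with b(v_p,q) = ν⁻¹(p,q)_Q and ‖v_p‖ ≤ (C/ν)‖p‖), the operator T(u,p) = (C² u − v_p, −C² p) is linear, injective, and satisfies ‖T(u,p)‖_X ≤ C(1+C)·‖(u,p)‖_X where ‖(v,q)‖_X = ‖v‖_H + ν⁻¹‖q‖_Q. -/

import Mathlib

open scoped RealInnerProductSpace

/-- The explicit T-coercivity operator `T(u,p) = (C² u − v_p, −C² p)` is linear, injective,
and continuous with constant `C(1+C)` in the norm `‖(u,p)‖_X = ‖u‖ + ν⁻¹‖p‖`. -/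
theorem stmt_4 {H Q : Type*} [NormedAddCommGroup H] [InnerProductSpace ℝ H] [CompleteSpace H]
    [NormedAddCommGroup Q] [InnerProductSpace ℝ Q] [CompleteSpace Q]
    (ν C : ℝ) (hν : 0 < ν) (hC : 0 < C)
    (b : H →L[ℝ] Q →L[ℝ] ℝ) (vmap : Q →ₗ[ℝ] H)
    (hb : ∀ p q : Q, b (vmap p) q = ν⁻¹ * ⟪p, q⟫)
    (hbound : ∀ p : Q, ‖vmap p‖ ≤ (C / ν) * ‖p‖)
    (T : H × Q → H × Q)
    (hTdef : ∀ u : H, ∀ p : Q, T (u, p) = (C ^ 2 • u - vmap p, (-(C ^ 2)) • p)) :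
    IsLinearMap ℝ T ∧ Function.Injective T ∧
      ∀ (u : H) (p : Q),
        ‖(T (u, p)).1‖ + ν⁻¹ * ‖(T (u, p)).2‖ ≤ C * (1 + C) * (‖u‖ + ν⁻¹ * ‖p‖) := by
  have hC2 : (0:ℝ) < C ^ 2 := by positivity
  have hTdef' : ∀ x : H × Q, T x = (C ^ 2 • x.1 - vmap x.2, (-(C ^ 2)) • x.2) := by
    rintro ⟨u, p⟩; exact hTdef u p
  refine ⟨⟨?_, ?_⟩, ?_, ?_⟩
  · rintro ⟨u, p⟩ ⟨u', p'⟩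
    simp only [hTdef', Prod.fst_add, Prod.snd_add, Prod.mk_add_mk, map_add, smul_add]
    congr 1
    abel
  · rintro c ⟨u, p⟩
    simp only [hTdef', Prod.smul_fst, Prod.smul_snd, Prod.smul_mk, map_smul, smul_sub,
      smul_comm c]
  · rintro ⟨u, p⟩ ⟨u', p'⟩ h
    simp only [hTdef', Prod.mk.injEq] at h
    have hp : p = p' :=
      smul_right_injective Q (neg_ne_zero.mpr (ne_of_gt hC2)) h.2
    subst hp
    have hu : C ^ 2 • u = C ^ 2 • u' := by
      have := sub_left_injective h.1
      exact this
    have : u = u' := smul_right_injective H (ne_of_gt hC2) hu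
    simp [this]
  · intro u p
    rw [hTdef u p]
    have h1 : ‖C ^ 2 • u - vmap p‖ ≤ C ^ 2 * ‖u‖ + (C / ν) * ‖p‖ := by
      calc ‖C ^ 2 • u - vmap p‖ ≤ ‖C ^ 2 • u‖ + ‖vmap p‖ := norm_sub_le _ _
        _ ≤ C ^ 2 * ‖u‖ + (C / ν) * ‖p‖ := by
            rw [norm_smul, Real.norm_eq_abs, abs_of_pos hC2]
            exact add_le_add le_rfl (hbound p)
    have h2 : ‖(-(C ^ 2)) • p‖ = C ^ 2 * ‖p‖ := by
      rw [norm_smul, Real.norm_eq_abs, abs_neg, abs_of_pos hC2]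
    simp only [h2]
    have hν' : 0 < ν⁻¹ := by positivity
    have hnu : ν⁻¹ * ‖p‖ ≥ 0 := by positivity
    have hu0 : (0:ℝ) ≤ ‖u‖ := norm_nonneg u
    have hdiv : C / ν = C * ν⁻¹ := div_eq_mul_inv C ν
    nlinarith [norm_nonneg p, sq_nonneg C, mul_pos hC hC]
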